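/- Let P > 1, γ > 0, x̂ ∈ ℝ, and l₁, l₋₁ ∈ ℝ with max(l₁, l₋₁) ≤ 0 and min(l₁, l₋₁) ≤ −(P/(P−1))·x̂². For any y ∈ ℝ define the updates: if l₁ ≥ l₋₁, then l₁⁺ = l₁ − γ²y² + (γ²y)²/(P + γ² − 1) and l₋₁⁺ = l₋₁ − P·x̂² − γ²y² + (P·x̂ + γ²y)²/(P + γ² − 1); if l₁ < l₋₁, then l₁⁺ = l₁ − P·x̂² − γ²y² + (P·x̂ + γ²y)²/(P + γ² − 1) and l₋₁⁺ = l₋₁ − γ²y² + (γ²y)²/(P + γ² − 1). Then l₁⁺ ≤ 0 and l₋₁⁺ ≤ 0. -/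

import Mathlib

lemma osn_easy (P γ y l : ℝ) (hP : 1 < P) (hγ : 0 < γ) (hl : l ≤ 0) :
    l - γ ^ 2 * y ^ 2 + (γ ^ 2 * y) ^ 2 / (P + γ ^ 2 - 1) ≤ 0 := by
  have hD : (0:ℝ) < P + γ ^ 2 - 1 := by nlinarith
  have h : (γ ^ 2 * y) ^ 2 / (P + γ ^ 2 - 1) ≤ γ ^ 2 * y ^ 2 := by
    rw [div_le_iff₀ hD]; nlinarith [sq_nonneg (γ * y), sq_nonneg y]
  linarith

lemma osn_hard (P γ xh y l : ℝ) (hP : 1 < P) (hγ : 0 < γ)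
    (hl : l ≤ -(P / (P - 1)) * xh ^ 2) :
    l - P * xh ^ 2 - γ ^ 2 * y ^ 2
      + (P * xh + γ ^ 2 * y) ^ 2 / (P + γ ^ 2 - 1) ≤ 0 := by
  have hD : (0:ℝ) < P + γ ^ 2 - 1 := by nlinarith
  have hP1 : (0:ℝ) < P - 1 := by linarith
  have hc : P / (P - 1) * (P - 1) = P := by field_simp
  have h : (P * xh + γ ^ 2 * y) ^ 2 / (P + γ ^ 2 - 1)
      ≤ P * xh ^ 2 + γ ^ 2 * y ^ 2 + P / (P - 1) * xh ^ 2 := by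
    have hkey : (P - 1) * (P * xh + γ ^ 2 * y) ^ 2
        ≤ (P - 1) * (P + γ ^ 2 - 1) * (P * xh ^ 2 + γ ^ 2 * y ^ 2)
          + (P + γ ^ 2 - 1) * (P * xh ^ 2) := by
      nlinarith [sq_nonneg (γ * ((P - 1) * y - P * xh))]
    rw [div_le_iff₀ hD, ← mul_le_mul_iff_of_pos_right hP1]
    have hc2 : (P * xh ^ 2 + γ ^ 2 * y ^ 2 + P / (P - 1) * xh ^ 2) * (P + γ ^ 2 - 1) * (P - 1)
        = (P - 1) * (P + γ ^ 2 - 1) * (P * xh ^ 2 + γ ^ 2 * y ^ 2)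
          + (P + γ ^ 2 - 1) * (P * xh ^ 2) := by
      field_simp
    rw [hc2]
    linarith [hkey]
  linarith

/-- **Lemma 2 (one-step negativity propagation).**  Let `P > 1`, `γ > 0`, and let
`l₁, l₋₁ ≤ 0` with `min l₁ l₋₁ ≤ −(P/(P−1)) x̂²`.  Then for any measurement `y`, the
updated past costs (per the deadbeat-controller case formulas) remain nonpositive. -/
theorem one_step_negativity
    (P γ xh l1 lm1 : ℝ) (hP : 1 < P) (hγ : 0 < γ)
    (hmax : max l1 lm1 ≤ 0)
    (hmin : min l1 lm1 ≤ -(P / (P - 1)) * xh ^ 2)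
    (y : ℝ) :
    if l1 ≥ lm1 then
      (l1 - γ ^ 2 * y ^ 2 + (γ ^ 2 * y) ^ 2 / (P + γ ^ 2 - 1) ≤ 0 ∧
        lm1 - P * xh ^ 2 - γ ^ 2 * y ^ 2
          + (P * xh + γ ^ 2 * y) ^ 2 / (P + γ ^ 2 - 1) ≤ 0)
    else
      (l1 - P * xh ^ 2 - γ ^ 2 * y ^ 2
          + (P * xh + γ ^ 2 * y) ^ 2 / (P + γ ^ 2 - 1) ≤ 0 ∧
        lm1 - γ ^ 2 * y ^ 2 + (γ ^ 2 * y) ^ 2 / (P + γ ^ 2 - 1) ≤ 0) := by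
  have h1 : l1 ≤ 0 := le_trans (le_max_left _ _) hmax
  have hm : lm1 ≤ 0 := le_trans (le_max_right _ _) hmax
  split_ifs with h
  · refine ⟨osn_easy P γ y l1 hP hγ h1, osn_hard P γ xh y lm1 hP hγ ?_⟩
    rw [min_eq_right h] at hmin; exact hmin
  · refine ⟨osn_hard P γ xh y l1 hP hγ ?_, osn_easy P γ y lm1 hP hγ hm⟩
    rw [min_eq_left (le_of_not_ge h)] at hmin; exact hmin
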